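/- Let a, b, λ, q be complex numbers with |q| < 1, |b| < 1, 1 + bq^j ≠ 0 for all integers j ≥ 1, and suppose G(aq, b, λq) ≠ 0. Then the continued fraction with b₀ = 1 − b + aq, partial numerators aₙ = λqⁿ + b, and partial denominators bₙ = 1 − b + aq^{n+1} for n ≥ 1, converges to G(a, b, λ) / G(aq, b, λq). -/

import Mathlib

/-- Numerator convergents: `cfNum a b (n+1)` is `Aₙ`, with `A₋₁ = cfNum a b 0 = 1`. -/
noncomputable def cfNum (a b : ℕ → ℂ) : ℕ → ℂ
  | 0 => 1
  | 1 => b 0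
  | n + 2 => b (n + 1) * cfNum a b (n + 1) + a (n + 1) * cfNum a b n

/-- Denominator convergents: `cfDen a b (n+1)` is `Bₙ`, with `B₋₁ = cfDen a b 0 = 0`. -/
noncomputable def cfDen (a b : ℕ → ℂ) : ℕ → ℂ
  | 0 => 0
  | 1 => 1
  | n + 2 => b (n + 1) * cfDen a b (n + 1) + a (n + 1) * cfDen a b n

/-- The continued fraction `b₀ + K(aₙ/bₙ)` converges to `f`: the approximants
`Aₙ/Bₙ` tend to `f` as `n → ∞`. -/
def CFConvergesTo (a b : ℕ → ℂ) (f : ℂ) : Prop :=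
  Filter.Tendsto (fun n => cfNum a b (n + 1) / cfDen a b (n + 1)) Filter.atTop (nhds f)

/-- Ramanujan's function `G(a, b, λ) = G(a, λ; b; q)`. -/
noncomputable def G (q a b l : ℂ) : ℂ :=
  ∑' n : ℕ, q ^ (n * (n + 1) / 2) * (∏ k ∈ Finset.range n, (a + l * q ^ k)) /
    ((∏ j ∈ Finset.range n, (1 - q ^ (j + 1))) * ∏ j ∈ Finset.range n, (1 + b * q ^ (j + 1)))

open Filter Finset

noncomputable def Tt (q b a l : ℂ) (n : ℕ) : ℂ :=
  q ^ (n * (n + 1) / 2) * (∏ k ∈ Finset.range n, (a + l * q ^ k)) /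
    ((∏ j ∈ Finset.range n, (1 - q ^ (j + 1))) * ∏ j ∈ Finset.range n, (1 + b * q ^ (j + 1)))

lemma G_eq_tsum (q a b l : ℂ) : G q a b l = ∑' n, Tt q b a l n := rfl

lemma Tt_zero (q b a l : ℂ) : Tt q b a l 0 = 1 := by simp [Tt]

lemma Tt_scale (q b a l c : ℂ) (n : ℕ) : Tt q b (a * c) (l * c) n = c ^ n * Tt q b a l n := by
  unfold Tt
  rw [show (∏ k ∈ range n, (a * c + l * c * q ^ k)) = ∏ k ∈ range n, (c * (a + l * q ^ k)) by
      apply Finset.prod_congr rfl; intro k _; ring,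
    Finset.prod_mul_distrib, Finset.prod_const, Finset.card_range]
  ring

section main
variable {a b l q : ℂ} (hq : ‖q‖ < 1) (hb1 : ‖b‖ < 1)
  (hb : ∀ j : ℕ, 1 ≤ j → 1 + b * q ^ j ≠ 0)

lemma triangle_succ (n : ℕ) : (n + 1) * (n + 2) / 2 = n * (n + 1) / 2 + (n + 1) := by
  obtain ⟨m, hm⟩ := Nat.even_mul_succ_self n
  have h2 : (n + 1) * (n + 2) = n * (n + 1) + 2 * (n + 1) := by ring
  omega

include hq in
lemma one_sub_q_pow_ne (j : ℕ) (hj : 1 ≤ j) : (1 : ℂ) - q ^ j ≠ 0 := by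
  intro h
  have : q ^ j = 1 := by linear_combination -h
  have h1 : ‖q ^ j‖ = 1 := by rw [this]; simp
  rw [norm_pow] at h1
  have : ‖q‖ ^ j < 1 := by
    calc ‖q‖ ^ j ≤ ‖q‖ ^ 1 := by
          apply pow_le_pow_of_le_one (norm_nonneg q) hq.le hj
      _ < 1 := by simpa using hq
  rw [h1] at this; exact lt_irrefl _ this

include hq hb in
lemma Tt_rec (n : ℕ) :
    (1 - q ^ (n + 1)) * (1 + b * q ^ (n + 1)) * Tt q b a l (n + 1)
      = q ^ (n + 1) * (a + l * q ^ n) * Tt q b a l n := by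
  have hP : (∏ j ∈ range n, (1 - q ^ (j + 1))) ≠ 0 :=
    Finset.prod_ne_zero_iff.2 fun j _ => one_sub_q_pow_ne hq (j + 1) (by omega)
  have hQ : (∏ j ∈ range n, (1 + b * q ^ (j + 1))) ≠ 0 :=
    Finset.prod_ne_zero_iff.2 fun j _ => hb (j + 1) (by omega)
  have h1 := one_sub_q_pow_ne hq (n + 1) (by omega)
  have h2 := hb (n + 1) (by omega)
  unfold Tt
  rw [Finset.prod_range_succ, Finset.prod_range_succ, Finset.prod_range_succ,
    triangle_succ, pow_add q (n * (n + 1) / 2) (n + 1)]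
  rw [← mul_div_assoc, ← mul_div_assoc,
    div_eq_div_iff (mul_ne_zero (mul_ne_zero hP h1) (mul_ne_zero hQ h2))
      (mul_ne_zero hP hQ)]
  ring

include hq hb1 hb in
lemma Tt_summable : Summable (Tt q b a l) := by
  apply summable_of_ratio_norm_eventually_le (r := 1/2) (by norm_num)
  have htend : Tendsto (fun n : ℕ => ‖q‖ ^ n) atTop (nhds 0) := by
    apply tendsto_pow_atTop_nhds_zero_of_norm_lt_one
    simpa using hq
  set c : ℝ := ‖a‖ + ‖l‖ with hc
  have hc0 : 0 ≤ c := by positivity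
  set δ : ℝ := min (1/2) (1 / (8 * (c + 1))) with hδ
  have hδpos : 0 < δ := by
    apply lt_min (by norm_num)
    positivity
  filter_upwards [htend.eventually (gt_mem_nhds hδpos)] with n hn
  have h1 : ‖q‖ ^ (n+1) ≤ δ := by
    calc ‖q‖ ^ (n+1) ≤ ‖q‖ ^ n :=
          pow_le_pow_of_le_one (norm_nonneg q) hq.le (by omega)
      _ ≤ δ := hn.le
  have hδhalf : δ ≤ 1/2 := min_le_left _ _
  have hδc : δ * (c + 1) ≤ 1/8 := by
    have : δ ≤ 1 / (8 * (c + 1)) := min_le_right _ _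
    rw [le_div_iff₀ (by positivity)] at this
    nlinarith
  have key := congrArg (‖·‖) (Tt_rec hq hb (a := a) (l := l) n)
  rw [norm_mul, norm_mul, norm_mul, norm_mul, norm_pow] at key
  have hA : ‖a + l * q ^ n‖ ≤ c := by
    calc ‖a + l * q ^ n‖ ≤ ‖a‖ + ‖l * q ^ n‖ :=
          norm_add_le _ _
      _ ≤ c := by
          rw [norm_mul, norm_pow]
          have : ‖q‖ ^ n ≤ 1 := pow_le_one₀ (norm_nonneg q) hq.le
          nlinarith [norm_nonneg l]
  have h2 : (1:ℝ)/2 ≤ ‖1 - q ^ (n+1)‖ := by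
    have := norm_sub_norm_le (1:ℂ) (q ^ (n+1))
    rw [norm_one, norm_pow] at this
    linarith
  have h3 : (1:ℝ)/2 ≤ ‖1 + b * q ^ (n+1)‖ := by
    have h := norm_sub_norm_le (1:ℂ) (-(b * q ^ (n+1)))
    rw [norm_one, norm_neg, sub_neg_eq_add, norm_mul, norm_pow] at h
    have hbq : ‖b‖ * ‖q‖ ^ (n+1) ≤ δ := by
      nlinarith [norm_nonneg b, pow_nonneg (norm_nonneg q) (n+1), hb1]
    linarith
  have hT1 : ‖Tt q b a l (n+1)‖ = ‖Tt q b a l (n+1)‖ := rfl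
  have hT0 : ‖Tt q b a l n‖ = ‖Tt q b a l n‖ := rfl
  have hTnn : 0 ≤ ‖Tt q b a l n‖ := norm_nonneg _
  have hT1nn : 0 ≤ ‖Tt q b a l (n+1)‖ := norm_nonneg _
  rw [hT1, hT0] at key
  have e1 : ‖q‖ ^ (n+1) * ‖a + l * q ^ n‖ ≤ δ * c :=
    mul_le_mul h1 hA (norm_nonneg _) hδpos.le
  have e2 : δ * c ≤ 1/8 := by nlinarith
  have e3 : (1/4) * ‖Tt q b a l (n+1)‖ ≤
      ‖1 - q ^ (n+1)‖ * ‖1 + b * q ^ (n+1)‖ * ‖Tt q b a l (n+1)‖ := by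
    have h14 : (1:ℝ)/4 ≤ ‖1 - q ^ (n+1)‖ * ‖1 + b * q ^ (n+1)‖ := by
      nlinarith
    exact mul_le_mul_of_nonneg_right h14 hT1nn
  have e4 : ‖q‖ ^ (n+1) * ‖a + l * q ^ n‖ * ‖Tt q b a l n‖ ≤
      (1/8) * ‖Tt q b a l n‖ :=
    mul_le_mul_of_nonneg_right (e1.trans e2) hTnn
  linarith

end main
section main2
variable {a b l q : ℂ} (hq : ‖q‖ < 1) (hb1 : ‖b‖ < 1)
  (hb : ∀ j : ℕ, 1 ≤ j → 1 + b * q ^ j ≠ 0)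

include hq hb1 hb in
lemma G_rec : G q a b l = (1 - b + a * q) * G q (a * q) b (l * q)
    + (l * q + b) * G q (a * q ^ 2) b (l * q ^ 2) := by
  have hS : Summable (Tt q b a l) := Tt_summable hq hb1 hb
  rw [G_eq_tsum, G_eq_tsum, G_eq_tsum]
  rw [tsum_congr (Tt_scale q b a l q), tsum_congr (Tt_scale q b a l (q ^ 2))]
  have hq1 : ‖q‖ ≤ 1 := hq.le
  have hbound : ∀ (c : ℂ), ‖c‖ ≤ 1 → ∀ n : ℕ, ‖c ^ n * Tt q b a l n‖ ≤ ‖Tt q b a l n‖ := by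
    intro c hc n
    rw [norm_mul, norm_pow]
    have h1 : ‖c‖ ^ n ≤ 1 := pow_le_one₀ (norm_nonneg c) hc
    nlinarith [norm_nonneg (Tt q b a l n), pow_nonneg (norm_nonneg c) n]
  have hSq : Summable (fun n => q ^ n * Tt q b a l n) :=
    Summable.of_norm_bounded hS.norm (hbound q hq1)
  have hSq2 : Summable (fun n => (q ^ 2) ^ n * Tt q b a l n) :=
    Summable.of_norm_bounded hS.norm (by
      apply hbound
      rw [norm_pow]
      exact pow_le_one₀ (norm_nonneg q) hq1)
  set T := Tt q b a l with hT
  have hV : Summable (fun n => (1 - q ^ n) * (1 + b * q ^ n) * T n) := by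
    apply Summable.of_norm_bounded (hS.norm.mul_left 4)
    intro n
    rw [norm_mul, norm_mul]
    have e1 : ‖(1:ℂ) - q ^ n‖ ≤ 2 := by
      calc ‖(1:ℂ) - q ^ n‖ ≤ ‖(1:ℂ)‖ + ‖q ^ n‖ := norm_sub_le _ _
        _ ≤ 2 := by
            rw [norm_one, norm_pow]
            have : ‖q‖ ^ n ≤ 1 := pow_le_one₀ (norm_nonneg q) hq1
            linarith
    have e2 : ‖(1:ℂ) + b * q ^ n‖ ≤ 2 := by
      calc ‖(1:ℂ) + b * q ^ n‖ ≤ ‖(1:ℂ)‖ + ‖b * q ^ n‖ := norm_add_le _ _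
        _ ≤ 2 := by
            rw [norm_one, norm_mul, norm_pow]
            have h1 : ‖q‖ ^ n ≤ 1 := pow_le_one₀ (norm_nonneg q) hq1
            have h2 : ‖b‖ ≤ 1 := hb1.le
            nlinarith [norm_nonneg b, pow_nonneg (norm_nonneg q) n]
    have e3 : ‖(1:ℂ) - q ^ n‖ * ‖(1:ℂ) + b * q ^ n‖ ≤ 4 := by
      nlinarith [norm_nonneg ((1:ℂ) - q ^ n), norm_nonneg ((1:ℂ) + b * q ^ n)]
    exact mul_le_mul_of_nonneg_right e3 (norm_nonneg _)
  have hW : Summable (fun n => q ^ (n + 1) * (a + l * q ^ n) * T n) := by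
    apply Summable.of_norm_bounded (hS.norm.mul_left (‖a‖ + ‖l‖))
    intro n
    rw [norm_mul, norm_mul, norm_pow]
    have e1 : ‖q‖ ^ (n + 1) ≤ 1 := pow_le_one₀ (norm_nonneg q) hq1
    have e2 : ‖a + l * q ^ n‖ ≤ ‖a‖ + ‖l‖ := by
      calc ‖a + l * q ^ n‖ ≤ ‖a‖ + ‖l * q ^ n‖ := norm_add_le _ _
        _ ≤ _ := by
            rw [norm_mul, norm_pow]
            have h1 : ‖q‖ ^ n ≤ 1 := pow_le_one₀ (norm_nonneg q) hq1
            have h2 := norm_nonneg l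
            nlinarith
    have e3 : ‖q‖ ^ (n + 1) * ‖a + l * q ^ n‖ ≤ ‖a‖ + ‖l‖ := by
      nlinarith [norm_nonneg (a + l * q ^ n), pow_nonneg (norm_nonneg q) (n+1)]
    exact mul_le_mul_of_nonneg_right e3 (norm_nonneg _)
  have hkey : ∑' n, (1 - q ^ n) * (1 + b * q ^ n) * T n
      = ∑' n, q ^ (n + 1) * (a + l * q ^ n) * T n := by
    rw [Summable.tsum_eq_zero_add hV]
    have h0 : (1 - q ^ 0) * (1 + b * q ^ 0) * T 0 = 0 := by simp
    rw [h0, zero_add]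
    exact tsum_congr fun n => Tt_rec hq hb n
  have hR : Summable (fun n => (1 - b + a * q) * (q ^ n * T n)
      + (l * q + b) * ((q ^ 2) ^ n * T n)) := (hSq.mul_left _).add (hSq2.mul_left _)
  have hptwise : ∀ n : ℕ, T n - ((1 - b + a * q) * (q ^ n * T n) + (l * q + b) * ((q ^ 2) ^ n * T n))
      = (1 - q ^ n) * (1 + b * q ^ n) * T n - q ^ (n + 1) * (a + l * q ^ n) * T n := by
    intro n
    have h2n : (q ^ 2) ^ n = (q ^ n) ^ 2 := by
      rw [← pow_mul, ← pow_mul, Nat.mul_comm]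
    rw [h2n]
    ring
  have hzero : ∑' n, T n - ∑' n, ((1 - b + a * q) * (q ^ n * T n)
      + (l * q + b) * ((q ^ 2) ^ n * T n)) = 0 := by
    rw [← Summable.tsum_sub hS hR, tsum_congr hptwise, Summable.tsum_sub hV hW, hkey, sub_self]
  have hsplit : ∑' n, ((1 - b + a * q) * (q ^ n * T n) + (l * q + b) * ((q ^ 2) ^ n * T n))
      = (1 - b + a * q) * ∑' n, q ^ n * T n + (l * q + b) * ∑' n, (q ^ 2) ^ n * T n := by
    rw [Summable.tsum_add (hSq.mul_left _) (hSq2.mul_left _), tsum_mul_left, tsum_mul_left]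
  rw [← hsplit]
  linear_combination hzero


set_option maxHeartbeats 1000000 in
include hq hb1 hb in
lemma Gn_tendsto :
    Filter.Tendsto (fun m : ℕ => G q (a * q ^ m) b (l * q ^ m)) atTop (nhds 1) := by
  have hS : Summable (Tt q b a l) := Tt_summable hq hb1 hb
  have hq1 : ‖q‖ ≤ 1 := hq.le
  have hS1 : Summable (fun k => ‖Tt q b a l (k + 1)‖) := (summable_nat_add_iff 1).2 hS.norm
  have hqm1 : ∀ m : ℕ, ‖q‖ ^ m ≤ 1 := fun m => pow_le_one₀ (norm_nonneg q) hq1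
  have hsm : ∀ m : ℕ, Summable (fun k => (q ^ m) ^ k * Tt q b a l k) := by
    intro m
    apply Summable.of_norm_bounded hS.norm
    intro k
    rw [norm_mul, norm_pow, norm_pow]
    have h1 : (‖q‖ ^ m) ^ k ≤ 1 := pow_le_one₀ (pow_nonneg (norm_nonneg q) m) (hqm1 m)
    exact mul_le_of_le_one_left (norm_nonneg _) h1
  have hGm : ∀ m : ℕ, G q (a * q ^ m) b (l * q ^ m) - 1
      = ∑' k, (q ^ m) ^ (k + 1) * Tt q b a l (k + 1) := by
    intro m
    rw [G_eq_tsum]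
    rw [tsum_congr (Tt_scale q b a l (q ^ m))]
    rw [Summable.tsum_eq_zero_add (hsm m)]
    simp only [Tt_zero, pow_zero, mul_one, one_mul]
    ring
  have hbnd : ∀ m : ℕ, ‖G q (a * q ^ m) b (l * q ^ m) - 1‖
      ≤ ‖q‖ ^ m * ∑' k, ‖Tt q b a l (k + 1)‖ := by
    intro m
    rw [hGm m]
    have hsn : Summable (fun k => ‖(q ^ m) ^ (k + 1) * Tt q b a l (k + 1)‖) := by
      apply Summable.of_nonneg_of_le (fun k => norm_nonneg _) _ hS1
      intro k
      rw [norm_mul, norm_pow, norm_pow]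
      have h1 : (‖q‖ ^ m) ^ (k + 1) ≤ 1 := pow_le_one₀ (pow_nonneg (norm_nonneg q) m) (hqm1 m)
      exact mul_le_of_le_one_left (norm_nonneg _) h1
    calc ‖∑' k, (q ^ m) ^ (k + 1) * Tt q b a l (k + 1)‖
        ≤ ∑' k, ‖(q ^ m) ^ (k + 1) * Tt q b a l (k + 1)‖ := norm_tsum_le_tsum_norm hsn
      _ ≤ ∑' k, ‖q‖ ^ m * ‖Tt q b a l (k + 1)‖ := by
          apply Summable.tsum_le_tsum _ hsn (hS1.mul_left _)
          intro k
          rw [norm_mul, norm_pow, norm_pow]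
          have h1 : (‖q‖ ^ m) ^ (k + 1) ≤ (‖q‖ ^ m) ^ 1 :=
            pow_le_pow_of_le_one (pow_nonneg (norm_nonneg q) m) (hqm1 m) (by omega)
          rw [pow_one] at h1
          exact mul_le_mul_of_nonneg_right h1 (norm_nonneg _)
      _ = ‖q‖ ^ m * ∑' k, ‖Tt q b a l (k + 1)‖ := tsum_mul_left
  have h0 : Filter.Tendsto (fun m : ℕ => G q (a * q ^ m) b (l * q ^ m) - 1) atTop (nhds 0) := by
    apply squeeze_zero_norm hbnd
    have := (tendsto_pow_atTop_nhds_zero_of_lt_one (norm_nonneg q)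
      (by simpa using hq)).mul_const (∑' k, ‖Tt q b a l (k + 1)‖)
    simpa using this
  have := h0.add (tendsto_const_nhds (α := ℕ) (f := atTop) (x := (1:ℂ)))
  simpa using this


include hq hb1 in
lemma rec_converges (x : ℕ → ℂ)
    (hx : ∀ n, x (n + 2) = (1 - b + a * q ^ (n + 2)) * x (n + 1) + (l * q ^ (n + 1) + b) * x n) :
    ∃ P, Filter.Tendsto x atTop (nhds P) := by
  set β := ‖b‖ with hβ
  set t := ‖q‖ with ht
  have hβ0 : 0 ≤ β := norm_nonneg b
  have ht0 : 0 ≤ t := norm_nonneg q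
  have hβ1 : β < 1 := hb1
  have ht1 : t < 1 := hq
  have ht1' : t ≤ 1 := ht1.le
  set c : ℝ := ‖a‖ + ‖l‖ with hc
  have hc0 : 0 ≤ c := by positivity
  set d : ℕ → ℂ := fun n => x (n + 1) - x n with hd
  have hdrec : ∀ n, d (n + 1) = -b * d n + q ^ (n + 1) * (a * q * x (n + 1) + l * x n) := by
    intro n
    simp only [hd]
    rw [hx n]
    ring
  set M : ℕ → ℝ := fun n => max ‖x (n + 1)‖ ‖x n‖ with hM
  have hM0 : ∀ n, 0 ≤ M n := fun n => le_trans (norm_nonneg _) (le_max_left _ _)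
  have hxleM : ∀ n, ‖x n‖ ≤ M n := fun n => le_max_right _ _
  have hx1leM : ∀ n, ‖x (n + 1)‖ ≤ M n := fun n => le_max_left _ _
  have hstep : ∀ n, ‖d (n + 1)‖ ≤ β * ‖d n‖ + c * t ^ (n + 1) * M n := by
    intro n
    rw [hdrec n]
    have e0 : ‖-b * d n‖ = β * ‖d n‖ := by rw [norm_mul, norm_neg]
    have e1 : ‖q ^ (n + 1) * (a * q * x (n + 1) + l * x n)‖ ≤ c * t ^ (n + 1) * M n := by
      rw [norm_mul, norm_pow]
      have e2 : ‖a * q * x (n + 1) + l * x n‖ ≤ c * M n := by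
        calc ‖a * q * x (n + 1) + l * x n‖ ≤ ‖a * q * x (n + 1)‖ + ‖l * x n‖ := norm_add_le _ _
          _ ≤ c * M n := by
              rw [norm_mul, norm_mul, norm_mul]
              have g1 : ‖a‖ * ‖q‖ * ‖x (n + 1)‖ ≤ ‖a‖ * M n := by
                have : ‖a‖ * ‖q‖ ≤ ‖a‖ * 1 := by
                  exact mul_le_mul_of_nonneg_left ht1' (norm_nonneg a)
                rw [mul_one] at this
                calc ‖a‖ * ‖q‖ * ‖x (n + 1)‖ ≤ ‖a‖ * ‖x (n + 1)‖ :=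
                      mul_le_mul_of_nonneg_right this (norm_nonneg _)
                  _ ≤ ‖a‖ * M n := mul_le_mul_of_nonneg_left (hx1leM n) (norm_nonneg a)
              have g2 : ‖l‖ * ‖x n‖ ≤ ‖l‖ * M n :=
                mul_le_mul_of_nonneg_left (hxleM n) (norm_nonneg l)
              rw [hc]
              nlinarith [hM0 n]
      calc ‖q‖ ^ (n + 1) * ‖a * q * x (n + 1) + l * x n‖ ≤ ‖q‖ ^ (n + 1) * (c * M n) :=
            mul_le_mul_of_nonneg_left e2 (pow_nonneg (norm_nonneg q) _)
        _ = c * t ^ (n + 1) * M n := by rw [ht]; ring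
    calc ‖-b * d n + q ^ (n + 1) * (a * q * x (n + 1) + l * x n)‖
        ≤ ‖-b * d n‖ + ‖q ^ (n + 1) * (a * q * x (n + 1) + l * x n)‖ := norm_add_le _ _
      _ ≤ β * ‖d n‖ + c * t ^ (n + 1) * M n := by rw [e0]; linarith
  have h1β : (0:ℝ) < 1 - β := by linarith
  set γ : ℝ := β / (1 - β) with hγ
  set ee : ℝ := c / (1 - β) with hee
  have hγ0 : 0 ≤ γ := div_nonneg hβ0 h1β.le
  have hee0 : 0 ≤ ee := div_nonneg hc0 h1β.le
  have hγβ : (1 + γ) * β = γ := by rw [hγ]; field_simp; ring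
  have heec : (1 + γ) * c = ee := by rw [hγ, hee]; field_simp; ring
  set u : ℕ → ℝ := fun n => M n + γ * ‖d n‖ with hu
  have hu0 : ∀ n, 0 ≤ u n := by
    intro n
    have := hM0 n
    have : 0 ≤ γ * ‖d n‖ := mul_nonneg hγ0 (norm_nonneg _)
    simp only [hu]
    nlinarith [hM0 n]
  have hMu : ∀ n, M n ≤ u n := by
    intro n
    simp only [hu]
    nlinarith [mul_nonneg hγ0 (norm_nonneg (d n))]
  have hustep : ∀ n, u (n + 1) ≤ u n * (1 + ee * t ^ (n + 1)) := by
    intro n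
    have key1 : M (n + 1) ≤ M n + ‖d (n + 1)‖ := by
      apply max_le
      · calc ‖x (n + 2)‖ = ‖x (n + 1) + d (n + 1)‖ := by
              simp only [hd]; ring_nf
          _ ≤ ‖x (n + 1)‖ + ‖d (n + 1)‖ := norm_add_le _ _
          _ ≤ M n + ‖d (n + 1)‖ := by linarith [hx1leM n]
      · linarith [hx1leM n, norm_nonneg (d (n + 1))]
    have key2 := hstep n
    have ht' : 0 ≤ t ^ (n + 1) := pow_nonneg ht0 _
    have step1 : u (n + 1) ≤ M n + (1 + γ) * ‖d (n + 1)‖ := by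
      simp only [hu]
      nlinarith [norm_nonneg (d (n + 1))]
    have step2 : (1 + γ) * ‖d (n + 1)‖ ≤ (1 + γ) * (β * ‖d n‖ + c * t ^ (n + 1) * M n) :=
      mul_le_mul_of_nonneg_left key2 (by linarith)
    have step3 : (1 + γ) * (β * ‖d n‖ + c * t ^ (n + 1) * M n)
        = γ * ‖d n‖ + ee * t ^ (n + 1) * M n := by
      linear_combination ‖d n‖ * hγβ + t ^ (n + 1) * M n * heec
    have step4 : M n + γ * ‖d n‖ + ee * t ^ (n + 1) * M n ≤ u n * (1 + ee * t ^ (n + 1)) := by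
      simp only [hu]
      nlinarith [mul_nonneg (mul_nonneg hee0 ht') (mul_nonneg hγ0 (norm_nonneg (d n)))]
    linarith
  set Cs : ℝ := ∑' k : ℕ, t ^ (k + 1) with hCs
  have hsgeom : Summable (fun k : ℕ => t ^ (k + 1)) :=
    (summable_nat_add_iff 1).2 (summable_geometric_of_lt_one ht0 ht1)
  have hCs0 : 0 ≤ Cs := tsum_nonneg fun k => pow_nonneg ht0 _
  have hsum_le : ∀ n : ℕ, ∑ k ∈ Finset.range n, t ^ (k + 1) ≤ Cs :=
    fun n => Summable.sum_le_tsum (Finset.range n) (fun k _ => pow_nonneg ht0 _) hsgeom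
  set B : ℝ := u 0 * Real.exp (ee * Cs) with hB
  have hgrow : ∀ n, u n ≤ u 0 * Real.exp (ee * ∑ k ∈ Finset.range n, t ^ (k + 1)) := by
    intro n
    induction n with
    | zero => simp
    | succ n ih =>
        have h1 := hustep n
        have h2 : 1 + ee * t ^ (n + 1) ≤ Real.exp (ee * t ^ (n + 1)) := by
          have := Real.add_one_le_exp (ee * t ^ (n + 1))
          linarith
        have h3 : 0 ≤ 1 + ee * t ^ (n + 1) := by positivity
        calc u (n + 1) ≤ u n * (1 + ee * t ^ (n + 1)) := h1
          _ ≤ (u 0 * Real.exp (ee * ∑ k ∈ Finset.range n, t ^ (k + 1)))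
              * Real.exp (ee * t ^ (n + 1)) :=
            mul_le_mul ih h2 h3 (by positivity)
          _ = u 0 * Real.exp (ee * ∑ k ∈ Finset.range (n + 1), t ^ (k + 1)) := by
            rw [mul_assoc, ← Real.exp_add, Finset.sum_range_succ, mul_add]
  have huB : ∀ n, u n ≤ B := by
    intro n
    calc u n ≤ u 0 * Real.exp (ee * ∑ k ∈ Finset.range n, t ^ (k + 1)) := hgrow n
      _ ≤ B := by
        rw [hB]
        apply mul_le_mul_of_nonneg_left _ (hu0 0)
        apply Real.exp_le_exp.2
        exact mul_le_mul_of_nonneg_left (hsum_le n) hee0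
  have hMB : ∀ n, M n ≤ B := fun n => (hMu n).trans (huB n)
  have hB0 : 0 ≤ B := le_trans (hM0 0) (hMB 0)
  -- geometric decay of d
  set ρ : ℝ := (max β t + 1) / 2 with hρ
  have hmax1 : max β t < 1 := max_lt hβ1 ht1
  have hβρ : β < ρ := by
    have := le_max_left β t
    rw [hρ]; linarith
  have htρ : t ≤ ρ := by
    have := le_max_right β t
    rw [hρ]; linarith
  have hρ1 : ρ < 1 := by rw [hρ]; linarith
  have hρ0 : 0 ≤ ρ := by rw [hρ]; linarith [le_max_right β t]
  set A : ℝ := max ‖d 0‖ (c * B / (ρ - β)) with hA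
  have hA0 : 0 ≤ A := le_trans (norm_nonneg _) (le_max_left _ _)
  have hAcB : c * B ≤ A * (ρ - β) := by
    have h1 : c * B / (ρ - β) ≤ A := le_max_right _ _
    rw [div_le_iff₀ (by linarith)] at h1
    linarith
  have hdA : ∀ n, ‖d n‖ ≤ A * ρ ^ n := by
    intro n
    induction n with
    | zero =>
        have : ‖d 0‖ ≤ A := le_max_left _ _
        simpa using this
    | succ n ih =>
        have h1 := hstep n
        have h2 : c * t ^ (n + 1) * M n ≤ c * B * ρ ^ n := by
          have e1 : t ^ (n + 1) ≤ ρ ^ n := by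
            calc t ^ (n + 1) ≤ ρ ^ (n + 1) := pow_le_pow_left₀ ht0 htρ _
              _ ≤ ρ ^ n := pow_le_pow_of_le_one hρ0 hρ1.le (by omega)
          have e2 : c * t ^ (n + 1) * M n ≤ c * t ^ (n + 1) * B :=
            mul_le_mul_of_nonneg_left (hMB n) (by positivity)
          have e3 : c * t ^ (n + 1) * B ≤ c * ρ ^ n * B := by
            have := mul_le_mul_of_nonneg_left e1 hc0
            exact mul_le_mul_of_nonneg_right this hB0
          calc c * t ^ (n + 1) * M n ≤ c * ρ ^ n * B := le_trans e2 e3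
            _ = c * B * ρ ^ n := by ring
        have h3 : β * ‖d n‖ ≤ β * (A * ρ ^ n) := mul_le_mul_of_nonneg_left ih hβ0
        have h4 : c * B * ρ ^ n ≤ A * (ρ - β) * ρ ^ n :=
          mul_le_mul_of_nonneg_right hAcB (pow_nonneg hρ0 n)
        calc ‖d (n + 1)‖ ≤ β * ‖d n‖ + c * t ^ (n + 1) * M n := h1
          _ ≤ β * (A * ρ ^ n) + A * (ρ - β) * ρ ^ n := by linarith
          _ = A * ρ ^ (n + 1) := by ring
  have hsd : Summable d :=
    Summable.of_norm_bounded ((summable_geometric_of_lt_one hρ0 hρ1).mul_left A) hdA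
  obtain ⟨S, hsS⟩ := hsd
  have hxsum : ∀ n, x n = x 0 + ∑ k ∈ Finset.range n, d k := by
    intro n
    induction n with
    | zero => simp
    | succ n ih =>
        rw [Finset.sum_range_succ, ← add_assoc, ← ih]
        simp only [hd]
        ring
  refine ⟨x 0 + S, ?_⟩
  have h2 := (tendsto_const_nhds (x := x 0) (f := atTop (α := ℕ))).add hsS.tendsto_sum_nat
  exact h2.congr fun n => (hxsum n).symm


end main2

theorem stmt9 (a b l q : ℂ) (hq : ‖q‖ < 1) (hb1 : ‖b‖ < 1)
    (hb : ∀ j : ℕ, 1 ≤ j → 1 + b * q ^ j ≠ 0)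
    (hG : G q (a * q) b (l * q) ≠ 0) :
    CFConvergesTo
      (fun n => l * q ^ n + b)
      (fun n => 1 - b + a * q ^ (n + 1))
      (G q a b l / G q (a * q) b (l * q)) := by
  unfold CFConvergesTo
  set xA := cfNum (fun n => l * q ^ n + b) (fun n => 1 - b + a * q ^ (n + 1)) with hxA
  set xB := cfDen (fun n => l * q ^ n + b) (fun n => 1 - b + a * q ^ (n + 1)) with hxB
  have hGrec : ∀ m : ℕ, G q (a * q ^ m) b (l * q ^ m)
      = (1 - b + a * q ^ (m + 1)) * G q (a * q ^ (m + 1)) b (l * q ^ (m + 1))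
      + (l * q ^ (m + 1) + b) * G q (a * q ^ (m + 2)) b (l * q ^ (m + 2)) := by
    intro m
    have h := G_rec (a := a * q ^ m) (l := l * q ^ m) hq hb1 hb
    rw [show a * q ^ (m + 1) = a * q ^ m * q from by ring,
      show l * q ^ (m + 1) = l * q ^ m * q from by ring,
      show a * q ^ (m + 2) = a * q ^ m * q ^ 2 from by ring,
      show l * q ^ (m + 2) = l * q ^ m * q ^ 2 from by ring]
    exact h
  have hrecA : ∀ n, xA (n + 2)
      = (1 - b + a * q ^ (n + 2)) * xA (n + 1) + (l * q ^ (n + 1) + b) * xA n := by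
    intro n
    rw [hxA]
    simp only [cfNum]
  have hrecB : ∀ n, xB (n + 2)
      = (1 - b + a * q ^ (n + 2)) * xB (n + 1) + (l * q ^ (n + 1) + b) * xB n := by
    intro n
    rw [hxB]
    simp only [cfDen]
  obtain ⟨P, hPA⟩ := rec_converges hq hb1 xA hrecA
  obtain ⟨Q, hQB⟩ := rec_converges hq hb1 xB hrecB
  have hGn1 : Filter.Tendsto (fun m : ℕ => G q (a * q ^ m) b (l * q ^ m)) atTop (nhds 1) :=
    Gn_tendsto hq hb1 hb
  have hiterA : ∀ n : ℕ, G q (a * q ^ 0) b (l * q ^ 0)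
      = xA (n + 1) * G q (a * q ^ (n + 1)) b (l * q ^ (n + 1))
      + (l * q ^ (n + 1) + b) * xA n * G q (a * q ^ (n + 2)) b (l * q ^ (n + 2)) := by
    intro n
    induction n with
    | zero =>
        rw [hGrec 0, hxA]
        simp only [cfNum]
        ring
    | succ n ih =>
        rw [ih, hGrec (n + 1), hxA]
        simp only [cfNum]
        rw [← hxA]
        ring
  have hiterB : ∀ n : ℕ, G q (a * q ^ 1) b (l * q ^ 1)
      = xB (n + 1) * G q (a * q ^ (n + 1)) b (l * q ^ (n + 1))
      + (l * q ^ (n + 1) + b) * xB n * G q (a * q ^ (n + 2)) b (l * q ^ (n + 2)) := by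
    intro n
    induction n with
    | zero =>
        rw [hxB]
        simp only [cfDen]
        ring
    | succ n ih =>
        rw [ih, hGrec (n + 1), hxB]
        simp only [cfDen]
        rw [← hxB]
        ring
  have t2 : Filter.Tendsto (fun n : ℕ => G q (a * q ^ (n + 1)) b (l * q ^ (n + 1)))
      atTop (nhds 1) := hGn1.comp (tendsto_add_atTop_nat 1)
  have t3 : Filter.Tendsto (fun n : ℕ => G q (a * q ^ (n + 2)) b (l * q ^ (n + 2)))
      atTop (nhds 1) := hGn1.comp (tendsto_add_atTop_nat 2)
  have t4 : Filter.Tendsto (fun n : ℕ => l * q ^ (n + 1) + b) atTop (nhds (0 + b)) := by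
    apply Filter.Tendsto.add_const
    have h1 : Filter.Tendsto (fun n : ℕ => q ^ (n + 1)) atTop (nhds 0) :=
      (tendsto_pow_atTop_nhds_zero_of_norm_lt_one (by simpa using hq)).comp
        (tendsto_add_atTop_nat 1)
    simpa using h1.const_mul l
  have t1A : Filter.Tendsto (fun n : ℕ => xA (n + 1)) atTop (nhds P) :=
    hPA.comp (tendsto_add_atTop_nat 1)
  have t1B : Filter.Tendsto (fun n : ℕ => xB (n + 1)) atTop (nhds Q) :=
    hQB.comp (tendsto_add_atTop_nat 1)
  have hlimA : Filter.Tendsto (fun n : ℕ =>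
      xA (n + 1) * G q (a * q ^ (n + 1)) b (l * q ^ (n + 1))
      + (l * q ^ (n + 1) + b) * xA n * G q (a * q ^ (n + 2)) b (l * q ^ (n + 2)))
      atTop (nhds (P * 1 + (0 + b) * P * 1)) :=
    (t1A.mul t2).add ((t4.mul hPA).mul t3)
  have hlimB : Filter.Tendsto (fun n : ℕ =>
      xB (n + 1) * G q (a * q ^ (n + 1)) b (l * q ^ (n + 1))
      + (l * q ^ (n + 1) + b) * xB n * G q (a * q ^ (n + 2)) b (l * q ^ (n + 2)))
      atTop (nhds (Q * 1 + (0 + b) * Q * 1)) :=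
    (t1B.mul t2).add ((t4.mul hQB).mul t3)
  have hG0 : G q (a * q ^ 0) b (l * q ^ 0) = P * 1 + (0 + b) * P * 1 :=
    tendsto_nhds_unique (tendsto_const_nhds.congr fun n => hiterA n) hlimA
  have hG1 : G q (a * q ^ 1) b (l * q ^ 1) = Q * 1 + (0 + b) * Q * 1 :=
    tendsto_nhds_unique (tendsto_const_nhds.congr fun n => hiterB n) hlimB
  have hG0' : G q a b l = (1 + b) * P := by
    have h := hG0
    rw [pow_zero, mul_one, mul_one] at h
    rw [h]; ring
  have hG1' : G q (a * q) b (l * q) = (1 + b) * Q := by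
    have h := hG1
    rw [pow_one] at h
    rw [h]; ring
  have hb2 : (1 : ℂ) + b ≠ 0 := by
    intro h
    have hbeq : b = -1 := by linear_combination h
    rw [hbeq] at hb1
    simp at hb1
  have hQ0 : Q ≠ 0 := by
    intro h
    apply hG
    rw [hG1', h, mul_zero]
  have hval : G q a b l / G q (a * q) b (l * q) = P / Q := by
    rw [hG0', hG1', mul_div_mul_left _ _ hb2]
  rw [hval]
  exact t1A.div t1B hQ0
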